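/- arXiv:2403.01947 — 3 statements merged into one kernel-verified Lean document; each statement's English description precedes it below -/
import Mathlib

section
/- Let G be a split graph with split partition K ⊎ S. Then G is a Helly circular-arc graph if and only if the auxiliary graph G^K is an interval graph. -/
namespace CAG

variable {V : Type*}

/-- The circle on which circular-arc models live. -/
abbrev Circle : Type := AddCircle (1 : ℝ)

/-- The closed arc of the circle starting at `s` and going a length `ℓ` in the
positive direction. -/
def circleArc (s ℓ : ℝ) : Set Circle :=
  (fun x : ℝ => (x : Circle)) '' Set.Icc s (s + ℓ)

/-- A circular-arc model of a graph `G`: an assignment of nonempty closed arcs of the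
circle to vertices such that two distinct vertices are adjacent iff their arcs meet. -/
structure CircularArcModel (G : SimpleGraph V) where
  arc : V → Set Circle
  isArc : ∀ v : V, ∃ s ℓ : ℝ, 0 ≤ ℓ ∧ arc v = circleArc s ℓ
  adj_iff : ∀ u v : V, u ≠ v → (G.Adj u v ↔ (arc u ∩ arc v).Nonempty)

/-- A graph is a circular-arc graph if it has a circular-arc model. -/
def IsCircularArcGraph (G : SimpleGraph V) : Prop := Nonempty (CircularArcModel G)

/-- An interval model of a graph `G`: an assignment of nonempty closed real intervals
to vertices such that two distinct vertices are adjacent iff their intervals meet. -/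
structure IntervalModel (G : SimpleGraph V) where
  lo : V → ℝ
  hi : V → ℝ
  lo_le_hi : ∀ v : V, lo v ≤ hi v
  adj_iff : ∀ u v : V, u ≠ v →
    (G.Adj u v ↔ (Set.Icc (lo u) (hi u) ∩ Set.Icc (lo v) (hi v)).Nonempty)

/-- The interval assigned to a vertex by an interval model. -/
def IntervalModel.ival {G : SimpleGraph V} (M : IntervalModel G) (v : V) : Set ℝ :=
  Set.Icc (M.lo v) (M.hi v)

/-- A graph is an interval graph if it has an interval model. -/
def IsIntervalGraph (G : SimpleGraph V) : Prop := Nonempty (IntervalModel G)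

/-- The closed neighbourhood `N[v]` of a vertex. -/
def closedNbhd (G : SimpleGraph V) (v : V) : Set V := insert v (G.neighborSet v)

/-- A vertex is simplicial if its closed neighbourhood is a clique. -/
def IsSimplicial (G : SimpleGraph V) (v : V) : Prop := G.IsClique (closedNbhd G v)

/-- The cycle graph on `n` vertices. -/
def cycleG (n : ℕ) : SimpleGraph (Fin n) :=
  SimpleGraph.fromRel (fun a b => (a.val + 1) % n = b.val)

/-- `G` contains an induced copy of `F`. -/
def InducedCopy {W : Type*} (F : SimpleGraph W) (G : SimpleGraph V) : Prop :=
  Nonempty (F ↪g G)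

/-- A graph is chordal if it has no induced cycle of length at least 4. -/
def Chordal (G : SimpleGraph V) : Prop :=
  ∀ n : ℕ, 4 ≤ n → ¬ InducedCopy (cycleG n) G

/-- The adjacency relation of the auxiliary graph `G^K`. -/
def auxAdj (G : SimpleGraph V) (K : Set V) (u v : V) : Prop :=
  (u ∈ K ∧ v ∈ K ∧ G.neighborSet u ∪ G.neighborSet v ≠ Set.univ) ∨
  (u ∉ K ∧ v ∉ K ∧ G.Adj u v) ∨
  (u ∈ K ∧ v ∉ K ∧ ¬ closedNbhd G v ⊆ closedNbhd G u) ∨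
  (v ∈ K ∧ u ∉ K ∧ ¬ closedNbhd G u ⊆ closedNbhd G v)

/-- The auxiliary graph `G^K` associated with a graph `G` and a clique `K`. -/
def auxGraph (G : SimpleGraph V) (K : Set V) : SimpleGraph V where
  Adj u v := u ≠ v ∧ auxAdj G K u v
  symm := ⟨by
    rintro u v ⟨hne, h⟩
    refine ⟨hne.symm, ?_⟩
    rcases h with ⟨h1, h2, h3⟩ | ⟨h1, h2, h3⟩ | ⟨h1, h2, h3⟩ | ⟨h1, h2, h3⟩
    · exact Or.inl ⟨h2, h1, by rwa [Set.union_comm]⟩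
    · exact Or.inr <| Or.inl ⟨h2, h1, h3.symm⟩
    · exact Or.inr <| Or.inr <| Or.inr ⟨h1, h2, h3⟩
    · exact Or.inr <| Or.inr <| Or.inl ⟨h1, h2, h3⟩⟩
  loopless := ⟨fun _ h => h.1 rfl⟩

/-- Condition (♯): `G^K` admits an interval model in which, for every `v ∈ K` and
`u ∉ K`, the interval of `v` contains the interval of `u` iff `u` and `v` are not
adjacent in `G`. -/
def SatisfiesSharp (G : SimpleGraph V) (K : Set V) : Prop :=
  ∃ M : IntervalModel (auxGraph G K),
    ∀ v ∈ K, ∀ u ∉ K, (M.ival u ⊆ M.ival v ↔ ¬ G.Adj v u)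

/-- An independent set of a graph. -/
def IsIndependentSet (G : SimpleGraph V) (s : Set V) : Prop :=
  ∀ ⦃u⦄, u ∈ s → ∀ ⦃v⦄, v ∈ s → u ≠ v → ¬ G.Adj u v

/-- A split partition: a partition of the vertex set into a clique and an independent set. -/
def IsSplitPartition (G : SimpleGraph V) (K S : Set V) : Prop :=
  K ∪ S = Set.univ ∧ Disjoint K S ∧ G.IsClique K ∧ IsIndependentSet G S

/-- A split graph. -/
def IsSplitGraph (G : SimpleGraph V) : Prop := ∃ K S : Set V, IsSplitPartition G K S

/-- A split graph is ambiguous if it has two distinct split partitions. -/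
def Ambiguous (G : SimpleGraph V) : Prop :=
  ∃ K₁ S₁ K₂ S₂ : Set V, IsSplitPartition G K₁ S₁ ∧ IsSplitPartition G K₂ S₂ ∧
    (K₁, S₁) ≠ (K₂, S₂)

/-- A maximal clique (as a set of vertices). -/
def IsMaxCliqueSet (G : SimpleGraph V) (C : Set V) : Prop :=
  G.IsClique C ∧ ∀ C' : Set V, G.IsClique C' → C ⊆ C' → C = C'

/-- A Helly circular-arc graph: one admitting a circular-arc model in which the arcs of
every maximal clique have a common point. -/
def IsHellyCircularArcGraph (G : SimpleGraph V) : Prop :=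
  ∃ M : CircularArcModel G, ∀ C : Set V, IsMaxCliqueSet G C →
    ∃ p : Circle, ∀ v ∈ C, p ∈ M.arc v

/-- The edge `ab` lies on an induced 4-cycle. -/
def EdgeOnInducedC4 (G : SimpleGraph V) (a b : V) : Prop :=
  ∃ c d : V, a ≠ c ∧ b ≠ d ∧ G.Adj a b ∧ G.Adj b c ∧ G.Adj c d ∧ G.Adj d a ∧
    ¬ G.Adj a c ∧ ¬ G.Adj b d

/-- A normalized circular-arc model. -/
def IsNormalized {G : SimpleGraph V} (M : CircularArcModel G) : Prop :=
  ∀ v₁ v₂ : V, G.Adj v₁ v₂ →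
    (closedNbhd G v₂ ⊆ closedNbhd G v₁ → M.arc v₂ ⊆ M.arc v₁) ∧
    (G.neighborSet v₁ ∪ G.neighborSet v₂ = Set.univ → ¬ EdgeOnInducedC4 G v₁ v₂ →
      M.arc v₁ ∪ M.arc v₂ = Set.univ)

/-- A universal vertex: a vertex adjacent to all other vertices. -/
def HasUniversalVertex (G : SimpleGraph V) : Prop :=
  ∃ v : V, ∀ u : V, u ≠ v → G.Adj v u

/-- `w` is a witness of the set `X ⊆ K`: a vertex of `S` adjacent in `G^K` to all of `X`. -/
def WitnessOf (G : SimpleGraph V) (K S : Set V) (w : V) (X : Set V) : Prop :=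
  w ∈ S ∧ ∀ x ∈ X, (auxGraph G K).Adj w x

/-- A set `X` is witnessed if it has a witness. -/
def Witnessed (G : SimpleGraph V) (K S : Set V) (X : Set V) : Prop :=
  ∃ w : V, WitnessOf G K S w X

/-- The induced subgraph of `G^K` on the vertex set `F` is witnessed: every maximal
clique of this subgraph that is disjoint from `S` is witnessed. -/
def WitnessedCopy (G : SimpleGraph V) (K S F : Set V) : Prop :=
  ∀ C ⊆ F, (auxGraph G K).IsClique C →
    (∀ C' ⊆ F, (auxGraph G K).IsClique C' → C ⊆ C' → C = C') →
    Disjoint C S → Witnessed G K S C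

/-- The sun: a triangle 0,1,2 together with degree-two vertices 3 (adjacent to 0,1),
4 (adjacent to 1,2) and 5 (adjacent to 0,2). -/
def sunF : SimpleGraph (Fin 6) :=
  SimpleGraph.fromRel (fun a b =>
    (a = 0 ∧ b = 1) ∨ (a = 0 ∧ b = 2) ∨ (a = 1 ∧ b = 2) ∨
    (a = 3 ∧ (b = 0 ∨ b = 1)) ∨ (a = 4 ∧ (b = 1 ∨ b = 2)) ∨ (a = 5 ∧ (b = 0 ∨ b = 2)))

/-- The long claw: centre 0 adjacent to 1,2,3; pendant vertices 4,5,6 attached to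
1,2,3 respectively. -/
def longClaw : SimpleGraph (Fin 7) :=
  SimpleGraph.fromRel (fun a b =>
    (a = 0 ∧ (b = 1 ∨ b = 2 ∨ b = 3)) ∨ (a = 1 ∧ b = 4) ∨ (a = 2 ∧ b = 5) ∨ (a = 3 ∧ b = 6))

/-- The whipping top, with vertices v0 = 0, v1 = 1, v2 = 2, v3 = 3, x1 = 4, x2 = 5,
x3 = 6: the path x1-v1-v2-v3-x3, with v0 adjacent to x1, v1, v2, v3, x3 and x2
adjacent exactly to v2. -/
def whippingTop : SimpleGraph (Fin 7) :=
  SimpleGraph.fromRel (fun a b =>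
    (a = 4 ∧ b = 1) ∨ (a = 1 ∧ b = 2) ∨ (a = 2 ∧ b = 3) ∨ (a = 3 ∧ b = 6) ∨
    (a = 0 ∧ (b = 4 ∨ b = 1 ∨ b = 2 ∨ b = 3 ∨ b = 6)) ∨ (a = 5 ∧ b = 2))

/-- The † graph on `p + 4` vertices: an induced path `v_1 … v_p` (the `inl` vertices),
a vertex `u0 = inr 0` adjacent to all `v_i`, and vertices `x1 = inr 1`, `x2 = inr 2`,
`x3 = inr 3` adjacent exactly to `v_1`, `u0`, `v_p` respectively. -/
def dagGraph (p : ℕ) : SimpleGraph (Fin p ⊕ Fin 4) :=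
  SimpleGraph.fromRel (fun a b =>
    match a, b with
    | Sum.inl i, Sum.inl j => j.val = i.val + 1
    | Sum.inr u, Sum.inl j => u = 0 ∨ (u = 1 ∧ j.val = 0) ∨ (u = 3 ∧ j.val + 1 = p)
    | Sum.inr u, Sum.inr w => u = 0 ∧ w = 2
    | _, _ => False)

/-- The ‡ graph on `p + 5` vertices: an induced path `v_1 … v_p` (the `inl` vertices),
adjacent vertices `u1 = inr 0` and `u2 = inr 1` each adjacent to all `v_i`, and
vertices `x1 = inr 2` (adjacent exactly to `v_1, u1`), `x2 = inr 3` (adjacent exactly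
to `u1, u2`) and `x3 = inr 4` (adjacent exactly to `v_p, u2`). -/
def ddagGraph (p : ℕ) : SimpleGraph (Fin p ⊕ Fin 5) :=
  SimpleGraph.fromRel (fun a b =>
    match a, b with
    | Sum.inl i, Sum.inl j => j.val = i.val + 1
    | Sum.inr u, Sum.inl j =>
        u = 0 ∨ u = 1 ∨ (u = 2 ∧ j.val = 0) ∨ (u = 4 ∧ j.val + 1 = p)
    | Sum.inr u, Sum.inr w =>
        (u = 0 ∧ w = 1) ∨ (u = 2 ∧ w = 0) ∨ (u = 3 ∧ (w = 0 ∨ w = 1)) ∨ (u = 4 ∧ w = 1)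
    | _, _ => False)

/-- A graph is a minimal non-interval graph iff it is isomorphic to a hole, the long
claw, the whipping top, a † graph, or a ‡ graph. -/
def IsMinimalNonIntervalGraph {W : Type*} (F : SimpleGraph W) : Prop :=
  (∃ n : ℕ, 4 ≤ n ∧ Nonempty (F ≃g cycleG n)) ∨
  Nonempty (F ≃g longClaw) ∨
  Nonempty (F ≃g whippingTop) ∨
  (∃ p : ℕ, 2 ≤ p ∧ Nonempty (F ≃g dagGraph p)) ∨
  (∃ p : ℕ, 1 ≤ p ∧ Nonempty (F ≃g ddagGraph p))

/-- The `k`-sun: the `inl` vertices form a clique (the even-numbered vertices of the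
cycle of length `2k`), the `inr` vertices are independent, and `inr j` is adjacent to
`inl j` and `inl ((j+1) mod k)`. -/
def sunGraph (k : ℕ) : SimpleGraph (Fin k ⊕ Fin k) :=
  SimpleGraph.fromRel (fun a b =>
    match a, b with
    | Sum.inl _, Sum.inl _ => True
    | Sum.inl i, Sum.inr j => i = j ∨ i.val = (j.val + 1) % k
    | _, _ => False)

/-- The graph `\overline{S_k}^+`: the complement of the `k`-sun together with a new
vertex (`none`) adjacent exactly to the `k` vertices forming a clique in the
complement (the `inr` vertices). -/
def sunComplPlus (k : ℕ) : SimpleGraph (Option (Fin k ⊕ Fin k)) :=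
  SimpleGraph.fromRel (fun a b =>
    match a, b with
    | some x, some y => (sunGraph k)ᶜ.Adj x y
    | some (Sum.inr _), none => True
    | _, _ => False)

/-- The graph `S^1_k`: the disjoint union of a sun and the gadget `D_k`, with two
triangle vertices of the sun identified with `v_1` and `v_k` of the gadget, plus all
edges between `{v_2, …, v_{k-1}}` and the four remaining sun vertices.  Here the
`inl` vertices are the gadget clique `v_1 … v_k` (0-based), `inr (inl a)` is the
gadget independent vertex `w_{a+1}`, and `inr (inr t)` for `t = 0,1,2,3` are the
third triangle vertex, and the three degree-two sun vertices adjacent (in the sun) to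
`{v_1,v_k}`, `{v_1,t}`, `{v_k,t}` respectively. -/
def S1 (k : ℕ) : SimpleGraph (Fin k ⊕ (Fin (k - 1) ⊕ Fin 4)) :=
  SimpleGraph.fromRel (fun x y =>
    match x, y with
    | Sum.inl _, Sum.inl _ => True
    | Sum.inr (Sum.inl a), Sum.inl b => b.val ≠ a.val ∧ b.val ≠ a.val + 1
    | Sum.inr (Sum.inr t), Sum.inl b =>
        t = 0 ∨ t = 1 ∨ (t = 2 ∧ b.val + 1 ≠ k) ∨ (t = 3 ∧ b.val ≠ 0)
    | Sum.inr (Sum.inr t), Sum.inr (Sum.inr t') => t = 0 ∧ (t' = 2 ∨ t' = 3)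
    | _, _ => False)

/-- The graph `S^2_k`: the disjoint union of a rising sun and the gadget `D_k`, with
the two degree-five vertices of the rising sun identified with `v_1` and `v_k` of the
gadget, plus all edges between `{v_2, …, v_{k-1}}` and the five remaining rising-sun
vertices.  Here the `inl` vertices are the gadget clique `v_1 … v_k` (0-based),
`inr (inl a)` is the gadget independent vertex `w_{a+1}`, and `inr (inr t)` for
`t = 0,…,4` are `d1`, `d2`, `x1`, `x2`, `x3` of the rising sun. -/
def S2 (k : ℕ) : SimpleGraph (Fin k ⊕ (Fin (k - 1) ⊕ Fin 5)) :=
  SimpleGraph.fromRel (fun x y =>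
    match x, y with
    | Sum.inl _, Sum.inl _ => True
    | Sum.inr (Sum.inl a), Sum.inl b => b.val ≠ a.val ∧ b.val ≠ a.val + 1
    | Sum.inr (Sum.inr t), Sum.inl b =>
        t = 0 ∨ t = 1 ∨ (t = 2 ∧ b.val + 1 ≠ k) ∨ t = 3 ∨ (t = 4 ∧ b.val ≠ 0)
    | Sum.inr (Sum.inr t), Sum.inr (Sum.inr t') =>
        (t = 0 ∧ t' = 1) ∨ (t = 0 ∧ t' = 2) ∨ (t = 1 ∧ t' = 4)
    | _, _ => False)

/-- The graph `F1` on 10 vertices: a clique `{0,1,2,3}` (= `v0,…,v3`), vertices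
`x1 = 4, x2 = 5, x3 = 6` where `x_i` is adjacent exactly to `v0` and the two `v_j`
with `j ∈ {1,2,3} \ {i}`, and vertices `w1 = 7, w2 = 8, w3 = 9` where `w_i` is
adjacent exactly to the two `v_j` with `j ∈ {1,2,3} \ {i}`. -/
def F1 : SimpleGraph (Fin 10) :=
  SimpleGraph.fromRel (fun a b =>
    (a.val < 4 ∧ b.val < 4) ∨
    (a = 4 ∧ (b = 0 ∨ b = 2 ∨ b = 3)) ∨
    (a = 5 ∧ (b = 0 ∨ b = 1 ∨ b = 3)) ∨
    (a = 6 ∧ (b = 0 ∨ b = 1 ∨ b = 2)) ∨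
    (a = 7 ∧ (b = 2 ∨ b = 3)) ∨
    (a = 8 ∧ (b = 1 ∨ b = 3)) ∨
    (a = 9 ∧ (b = 1 ∨ b = 2)))

/-- The graph `F2` on 9 vertices: a clique `{0,1,2,3}` (= `v0,…,v3`) together with
`x1 = 4` adjacent exactly to `v2, v3`; `x2 = 5` adjacent exactly to `v0, v1, v3`;
`x3 = 6` adjacent exactly to `v1, v2`; `w1 = 7` adjacent exactly to `v3`; and
`w2 = 8` adjacent exactly to `v1`. -/
def F2 : SimpleGraph (Fin 9) :=
  SimpleGraph.fromRel (fun a b =>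
    (a.val < 4 ∧ b.val < 4) ∨
    (a = 4 ∧ (b = 2 ∨ b = 3)) ∨
    (a = 5 ∧ (b = 0 ∨ b = 1 ∨ b = 3)) ∨
    (a = 6 ∧ (b = 1 ∨ b = 2)) ∨
    (a = 7 ∧ b = 3) ∨
    (a = 8 ∧ b = 1))

/-- The net plus an isolated vertex: triangle `0,1,2`, pendant vertices `3,4,5`
attached to `0,1,2` respectively, and an isolated vertex `6`. -/
def netStar : SimpleGraph (Fin 7) :=
  SimpleGraph.fromRel (fun a b =>
    (a = 0 ∧ b = 1) ∨ (a = 0 ∧ b = 2) ∨ (a = 1 ∧ b = 2) ∨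
    (a = 3 ∧ b = 0) ∨ (a = 4 ∧ b = 1) ∨ (a = 5 ∧ b = 2))

/-- The graph `W`: the complement of the 4-sun — a clique `0,1,2,3` (= `v1,…,v4`)
plus an independent set `4,5,6,7` (= `u1,…,u4`) with `u_i` adjacent exactly to `v_i`
and `v_{i+1 mod 4}` — together with a new vertex `8` adjacent exactly to `v1 = 0` and
`v3 = 2`. -/
def Wgraph : SimpleGraph (Fin 9) :=
  SimpleGraph.fromRel (fun a b =>
    (a.val < 4 ∧ b.val < 4) ∨
    (4 ≤ a.val ∧ a.val ≤ 7 ∧ (b.val = a.val - 4 ∨ b.val = (a.val - 4 + 1) % 4)) ∨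
    (a = 8 ∧ (b = 0 ∨ b = 2)))

/-- A clique path of a graph `H`: a linear ordering `K_1, …, K_len` of all maximal
cliques of `H` such that for every vertex the cliques containing it are consecutive.
Indices outside `[1, len]` carry the empty set (sentinels). -/
structure CliquePath (H : SimpleGraph V) where
  len : ℕ
  Kc : ℕ → Set V
  sentinel : ∀ i : ℕ, (i = 0 ∨ len < i) → Kc i = ∅
  maxclique : ∀ i : ℕ, 1 ≤ i → i ≤ len → IsMaxCliqueSet H (Kc i)
  surj : ∀ C : Set V, IsMaxCliqueSet H C → ∃ i, 1 ≤ i ∧ i ≤ len ∧ Kc i = C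
  inj : ∀ i j : ℕ, 1 ≤ i → i ≤ len → 1 ≤ j → j ≤ len → Kc i = Kc j → i = j
  consec : ∀ (v : V) (i j k : ℕ), i ≤ j → j ≤ k → v ∈ Kc i → v ∈ Kc k → v ∈ Kc j

/-- A module of a graph: every vertex outside is adjacent to all of it or none of it. -/
def GraphModule (H : SimpleGraph V) (M : Set V) : Prop :=
  ∀ u ∈ M, ∀ v ∈ M, ∀ x ∉ M, (H.Adj x u ↔ H.Adj x v)

/-- A graph is quasi-prime if every nontrivial module is a clique. -/
def QuasiPrime (H : SimpleGraph V) : Prop :=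
  ∀ M : Set V, GraphModule H M → M ≠ Set.univ → ¬ M.Subsingleton → H.IsClique M


/-! ### Auxiliary lemmas for Statement 2 -/

section Helpers

lemma coe_eq_coe {x y : ℝ} : ((x : Circle) = (y : Circle)) ↔ ∃ k : ℤ, y = x + k := by
  rw [QuotientAddGroup.eq_iff_sub_mem, AddSubgroup.mem_zmultiples_iff]
  constructor
  · rintro ⟨k, hk⟩
    simp only [zsmul_eq_mul, mul_one] at hk
    exact ⟨-k, by push_cast; linarith⟩
  · rintro ⟨k, rfl⟩
    exact ⟨-k, by simp only [zsmul_eq_mul, mul_one]; push_cast; ring⟩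

lemma mem_circleArc {x s ℓ : ℝ} :
    ((x : Circle) ∈ circleArc s ℓ) ↔ ∃ k : ℤ, x + k ∈ Set.Icc s (s + ℓ) := by
  constructor
  · rintro ⟨y, hy, hxy⟩
    obtain ⟨k, rfl⟩ := coe_eq_coe.mp hxy
    exact ⟨-k, by push_cast; simpa using hy⟩
  · rintro ⟨k, hk⟩
    exact ⟨x + k, hk, coe_eq_coe.mpr ⟨-k, by push_cast; ring⟩⟩

lemma circleArc_zero (a : ℝ) : circleArc a 0 = {(a : Circle)} := by
  unfold circleArc
  rw [add_zero, Set.Icc_self, Set.image_singleton]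

lemma exists_rep_Ioo {q : Circle} {c : ℝ} (h : q ≠ (c : Circle)) :
    ∃ x : ℝ, c < x ∧ x < c + 1 ∧ (x : Circle) = q := by
  obtain ⟨y, rfl⟩ := QuotientAddGroup.mk_surjective q
  refine ⟨y - ⌊y - c⌋, ?_, ?_, ?_⟩
  · rcases lt_or_eq_of_le (by linarith [Int.floor_le (y - c)] : c ≤ y - ⌊y - c⌋) with h' | h'
    · exact h'
    · exact absurd (coe_eq_coe.mpr ⟨⌊y - c⌋, by linarith⟩).symm h
  · linarith [Int.lt_floor_add_one (y - c)]
  · exact coe_eq_coe.mpr ⟨⌊y - c⌋, by ring⟩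

lemma mem_circleArc_of_one_le {x a ℓ : ℝ} (hℓ : 1 ≤ ℓ) : (x : Circle) ∈ circleArc a ℓ := by
  refine mem_circleArc.mpr ⟨⌈a - x⌉, ?_, ?_⟩
  · linarith [Int.le_ceil (a - x)]
  · linarith [Int.ceil_lt_add_one (a - x)]

/-- Key convexity: on the cut line `(c, c+1)` where `π c` lies in the arc,
the complement of the arc is convex. -/
lemma arc_convex {a ℓ c x y z : ℝ}
    (hp : ((c : ℝ) : Circle) ∈ circleArc a ℓ)
    (hx : c < x) (hy : y < c + 1) (hxz : x ≤ z) (hzy : z ≤ y)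
    (hxn : ((x : ℝ) : Circle) ∉ circleArc a ℓ)
    (hyn : ((y : ℝ) : Circle) ∉ circleArc a ℓ) :
    ((z : ℝ) : Circle) ∉ circleArc a ℓ := by
  have hℓ1 : ℓ < 1 := by
    by_contra h
    exact hxn (mem_circleArc_of_one_le (by linarith))
  obtain ⟨k₀, hk₀⟩ := mem_circleArc.mp hp
  simp only [Set.mem_Icc] at hk₀
  set a' : ℝ := a - k₀ with ha'
  have ha'c : a' ≤ c := by linarith [hk₀.1]
  have hca' : c ≤ a' + ℓ := by linarith [hk₀.2]
  intro hz
  obtain ⟨m', hm'⟩ := mem_circleArc.mp hz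
  simp only [Set.mem_Icc] at hm'
  set m : ℤ := m' - k₀ with hm
  have hz1 : a' - m ≤ z := by push_cast [hm, ha']; linarith [hm'.1]
  have hz2 : z ≤ a' + ℓ - m := by push_cast [hm, ha']; linarith [hm'.2]
  have hm0 : (m : ℝ) < 1 := by linarith
  have hm1 : (-2 : ℝ) < (m : ℝ) := by linarith
  have hm0' : m ≤ 0 := by exact_mod_cast Int.lt_add_one_iff.mp (by exact_mod_cast hm0)
  have hm1' : -2 < m := by exact_mod_cast hm1
  interval_cases m
  · -- m = -1 : y is in the arc
    apply hyn
    refine mem_circleArc.mpr ⟨k₀ - 1, ?_, ?_⟩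
    · push_cast; push_cast at hz1; simp only [ha'] at hz1; linarith
    · push_cast; simp only [ha'] at hca'; linarith
  · -- m = 0 : x is in the arc
    apply hxn
    refine mem_circleArc.mpr ⟨k₀, ?_, ?_⟩
    · simp only [ha'] at ha'c; push_cast; linarith
    · push_cast at hz2; simp only [ha'] at hz2; linarith

variable {G : SimpleGraph V} {K S : Set V}

lemma mem_closedNbhd {v x : V} : x ∈ closedNbhd G v ↔ x = v ∨ G.Adj v x := by
  simp [closedNbhd]

lemma split_not_mem_K (h : IsSplitPartition G K S) {s : V} (hs : s ∈ S) : s ∉ K :=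
  fun hk => Set.disjoint_left.mp h.2.1 hk hs

lemma split_ne (h : IsSplitPartition G K S) {v s : V} (hv : v ∈ K) (hs : s ∈ S) : v ≠ s :=
  fun e => split_not_mem_K h hs (e ▸ hv)

lemma split_mem_or (h : IsSplitPartition G K S) (v : V) : v ∈ K ∨ v ∈ S := by
  have := h.1
  have hv : v ∈ K ∪ S := this ▸ Set.mem_univ v
  exact hv

lemma split_nbhd_subset (h : IsSplitPartition G K S) {s : V} (hs : s ∈ S) :
    G.neighborSet s ⊆ K := by
  intro x hx
  rw [SimpleGraph.mem_neighborSet] at hx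
  rcases split_mem_or h x with hxK | hxS
  · exact hxK
  · exact absurd hx (h.2.2.2 hs hxS hx.ne)

lemma split_K_subset_closedNbhd (h : IsSplitPartition G K S) {v : V} (hv : v ∈ K) :
    K ⊆ closedNbhd G v := by
  intro x hx
  rw [mem_closedNbhd]
  by_cases hxv : x = v
  · exact Or.inl hxv
  · exact Or.inr (h.2.2.1 hv hx (Ne.symm hxv))

lemma split_closedNbhd_subset_iff (h : IsSplitPartition G K S) {v s : V}
    (hv : v ∈ K) (hs : s ∈ S) :
    (closedNbhd G s ⊆ closedNbhd G v ↔ G.Adj v s) := by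
  constructor
  · intro hsub
    have := hsub (mem_closedNbhd.mpr (Or.inl rfl))
    rcases mem_closedNbhd.mp this with h' | h'
    · exact absurd h'.symm (split_ne h hv hs)
    · exact h'
  · intro hadj x hx
    rcases mem_closedNbhd.mp hx with rfl | h'
    · exact mem_closedNbhd.mpr (Or.inr hadj)
    · exact split_K_subset_closedNbhd h hv (split_nbhd_subset h hs (by rwa [SimpleGraph.mem_neighborSet]))

lemma aux_adj_KS (h : IsSplitPartition G K S) {v s : V} (hv : v ∈ K) (hs : s ∈ S) :
    ((auxGraph G K).Adj v s ↔ ¬ G.Adj v s) := by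
  have hsK : s ∉ K := split_not_mem_K h hs
  have hne : v ≠ s := split_ne h hv hs
  constructor
  · rintro ⟨-, h'⟩
    rcases h' with ⟨-, h2, -⟩ | ⟨h1, -, -⟩ | ⟨-, -, h3⟩ | ⟨h1, -, -⟩
    · exact absurd h2 hsK
    · exact absurd hv h1
    · exact fun hadj => h3 ((split_closedNbhd_subset_iff h hv hs).mpr hadj)
    · exact absurd h1 hsK
  · intro hnadj
    exact ⟨hne, Or.inr (Or.inr (Or.inl ⟨hv, hsK,
      fun hsub => hnadj ((split_closedNbhd_subset_iff h hv hs).mp hsub)⟩))⟩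

lemma aux_adj_SS (h : IsSplitPartition G K S) {s t : V} (hs : s ∈ S) (ht : t ∈ S) :
    ¬ (auxGraph G K).Adj s t := by
  rintro ⟨hne, h'⟩
  have hsK : s ∉ K := split_not_mem_K h hs
  have htK : t ∉ K := split_not_mem_K h ht
  rcases h' with ⟨h1, -, -⟩ | ⟨-, -, h3⟩ | ⟨h1, -, -⟩ | ⟨h1, -, -⟩
  · exact hsK h1
  · exact h.2.2.2 hs ht hne h3
  · exact hsK h1
  · exact htK h1

lemma aux_adj_KK (h : IsSplitPartition G K S) {v w : V} (hv : v ∈ K) (hw : w ∈ K)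
    (hne : v ≠ w) :
    ((auxGraph G K).Adj v w ↔ ∃ s ∈ S, ¬ G.Adj v s ∧ ¬ G.Adj w s) := by
  constructor
  · rintro ⟨-, h'⟩
    rcases h' with ⟨-, -, h3⟩ | ⟨h1, -, -⟩ | ⟨-, h2, -⟩ | ⟨-, h2, -⟩
    · obtain ⟨x, hx⟩ := Set.ne_univ_iff_exists_notMem _ |>.mp h3
      simp only [Set.mem_union, SimpleGraph.mem_neighborSet, not_or] at hx
      rcases split_mem_or h x with hxK | hxS
      · exfalso
        by_cases hxv : x = v
        · exact hx.2 (hxv ▸ (h.2.2.1 hw hv hne.symm))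
        · exact hx.1 (h.2.2.1 hv hxK (Ne.symm hxv))
      · exact ⟨x, hxS, hx.1, hx.2⟩
    · exact absurd hv h1
    · exact absurd hw h2
    · exact absurd hv h2
  · rintro ⟨s, hsS, h1, h2⟩
    refine ⟨hne, Or.inl ⟨hv, hw, fun heq => ?_⟩⟩
    have : s ∈ G.neighborSet v ∪ G.neighborSet w := heq ▸ Set.mem_univ s
    rcases this with h' | h'
    · exact h1 h'
    · exact h2 h'

lemma split_maxclique_closedNbhd (h : IsSplitPartition G K S) {s : V} (hs : s ∈ S) :
    IsMaxCliqueSet G (closedNbhd G s) := by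
  constructor
  · intro x hx y hy hxy
    rcases mem_closedNbhd.mp hx with rfl | hx'
    · rcases mem_closedNbhd.mp hy with rfl | hy'
      · exact absurd rfl hxy
      · exact hy'
    · rcases mem_closedNbhd.mp hy with rfl | hy'
      · exact hx'.symm
      · exact h.2.2.1 (split_nbhd_subset h hs (by rwa [SimpleGraph.mem_neighborSet]))
          (split_nbhd_subset h hs (by rwa [SimpleGraph.mem_neighborSet])) hxy
  · intro C' hC' hsub
    refine Set.Subset.antisymm hsub (fun x hx => ?_)
    by_cases hxs : x = s
    · exact mem_closedNbhd.mpr (Or.inl hxs)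
    · exact mem_closedNbhd.mpr (Or.inr (hC' (hsub (mem_closedNbhd.mpr (Or.inl rfl))) hx
        (Ne.symm hxs)))

lemma exists_maxclique_supset [Fintype V] (G : SimpleGraph V) {K : Set V}
    (hK : G.IsClique K) : ∃ C : Set V, K ⊆ C ∧ IsMaxCliqueSet G C := by
  classical
  set fam : Finset (Finset V) :=
    Finset.univ.filter (fun F : Finset V => G.IsClique (F : Set V) ∧ K ⊆ (F : Set V)) with hfam
  have hne : fam.Nonempty := by
    refine ⟨K.toFinset, ?_⟩
    simp only [hfam, Finset.mem_filter, Finset.mem_univ, true_and, Set.coe_toFinset]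
    exact ⟨hK, le_refl K⟩
  obtain ⟨F, hF, hmax⟩ := fam.exists_max_image Finset.card hne
  simp only [hfam, Finset.mem_filter, Finset.mem_univ, true_and] at hF
  refine ⟨(F : Set V), hF.2, hF.1, fun C' hC' hsub => ?_⟩
  have hfin : C'.Finite := Set.toFinite C'
  have hF' : hfin.toFinset ∈ fam := by
    simp only [hfam, Finset.mem_filter, Finset.mem_univ, true_and, Set.Finite.coe_toFinset]
    exact ⟨hC', hF.2.trans hsub⟩
  have hsub' : F ⊆ hfin.toFinset := by
    intro x hx
    rw [Set.Finite.mem_toFinset]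
    exact hsub hx
  have := Finset.eq_of_subset_of_card_le hsub' (hmax _ hF')
  rw [← hfin.coe_toFinset, ← this]

lemma backward_dir {V : Type*} [Fintype V] {G : SimpleGraph V} {K S : Set V}
    (hKS : IsSplitPartition G K S) (h : IsIntervalGraph (auxGraph G K)) :
    IsHellyCircularArcGraph G := by
  classical
  obtain ⟨M⟩ := h
  by_cases hV : Nonempty V
  swap
  · have hE : IsEmpty V := not_nonempty_iff.mp hV
    refine ⟨⟨fun _ => circleArc 0 0, fun v => (hE.false v).elim,
      fun u v _ => (hE.false u).elim⟩, fun C _ => ⟨((0:ℝ) : Circle), fun v _ => (hE.false v).elim⟩⟩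
  set H := auxGraph G K with hH
  -- the Helly point of the closed neighbourhood of each independent vertex
  have hTne : ∀ s : V, (insert s (Finset.univ.filter (fun v => H.Adj s v))).Nonempty :=
    fun s => Finset.insert_nonempty _ _
  set T : V → Finset V := fun s => insert s (Finset.univ.filter (fun v => H.Adj s v)) with hT
  set q : V → ℝ := fun s => (T s).sup' (hTne s) M.lo with hq
  have hmemT : ∀ s x : V, x ∈ T s ↔ (x = s ∨ H.Adj s x) := by
    intro s x
    simp [hT, Finset.mem_insert, Finset.mem_filter]
  have hnbK : ∀ s x : V, s ∈ S → H.Adj s x → x ∈ K := by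
    intro s x hs hadj
    rcases split_mem_or hKS x with hxK | hxS
    · exact hxK
    · exact absurd hadj (aux_adj_SS hKS hs hxS)
  have hpair : ∀ s : V, s ∈ S → ∀ x ∈ T s, ∀ y ∈ T s, M.lo y ≤ M.hi x := by
    intro s hs x hx y hy
    by_cases hxy : x = y
    · exact hxy ▸ M.lo_le_hi y
    · have hadj : H.Adj x y := by
        rcases (hmemT s x).mp hx with heq | hx'
        · rcases (hmemT s y).mp hy with heq' | hy'
          · exact absurd (heq.trans heq'.symm) hxy
          · rw [heq]; exact hy'
        · rcases (hmemT s y).mp hy with heq' | hy'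
          · rw [heq']; exact hx'.symm
          · have hxK := hnbK s x hs hx'
            have hyK := hnbK s y hs hy'
            refine (aux_adj_KK hKS hxK hyK hxy).mpr ⟨s, hs, ?_, ?_⟩
            · exact fun hGa => ((aux_adj_KS hKS hxK hs).mp hx'.symm) hGa
            · exact fun hGa => ((aux_adj_KS hKS hyK hs).mp hy'.symm) hGa
      obtain ⟨z, hz⟩ := (M.adj_iff x y hxy).mp hadj
      exact le_trans hz.2.1 hz.1.2
  have hqmem : ∀ s : V, s ∈ S → ∀ x ∈ T s, M.lo x ≤ q s ∧ q s ≤ M.hi x := by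
    intro s hs x hx
    refine ⟨Finset.le_sup' M.lo hx, ?_⟩
    obtain ⟨y, hy, hqy⟩ := Finset.exists_mem_eq_sup' (hTne s) M.lo
    rw [hq]
    simp only
    rw [hqy]
    exact hpair s hs x hx y hy
  have hsT : ∀ s : V, s ∈ T s := fun s => (hmemT s s).mpr (Or.inl rfl)
  have hq_in : ∀ s : V, s ∈ S → M.lo s ≤ q s ∧ q s ≤ M.hi s := fun s hs => hqmem s hs s (hsT s)
  -- disjointness of intervals for adjacent (in G) K-S pairs
  have hdisj : ∀ v s : V, v ∈ K → s ∈ S → G.Adj v s →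
      (Set.Icc (M.lo v) (M.hi v) ∩ Set.Icc (M.lo s) (M.hi s)) = ∅ := by
    intro v s hv hs hadj
    by_contra hne
    have hnadj : ¬ H.Adj v s := fun h' => ((aux_adj_KS hKS hv hs).mp h') hadj
    exact hnadj ((M.adj_iff v s (split_ne hKS hv hs)).mpr
      (Set.nonempty_iff_ne_empty.mpr hne))
  have hqnot : ∀ v s : V, v ∈ K → s ∈ S → G.Adj v s → q s ∉ Set.Icc (M.lo v) (M.hi v) := by
    intro v s hv hs hadj hmem
    have : q s ∈ (Set.Icc (M.lo v) (M.hi v) ∩ Set.Icc (M.lo s) (M.hi s)) :=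
      ⟨hmem, Set.mem_Icc.mpr (hq_in s hs)⟩
    rw [hdisj v s hv hs hadj] at this
    exact this
  have hqinj : ∀ s t : V, s ∈ S → t ∈ S → s ≠ t → q s ≠ q t := by
    intro s t hs ht hst heq
    have hnadj : ¬ H.Adj s t := aux_adj_SS hKS hs ht
    apply hnadj
    refine (M.adj_iff s t hst).mpr ⟨q s, Set.mem_Icc.mpr (hq_in s hs), ?_⟩
    rw [heq]
    exact Set.mem_Icc.mpr (hq_in t ht)
  -- the margin ε
  set P : Finset (V × V) :=
    Finset.univ.filter (fun p => p.1 ∈ K ∧ p.2 ∈ S ∧ G.Adj p.1 p.2) with hP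
  set d : V × V → ℝ := fun p => max (M.lo p.2 - M.hi p.1) (M.lo p.1 - M.hi p.2) with hd
  have hdpos : ∀ p ∈ P, 0 < d p := by
    intro p hp
    simp only [hP, Finset.mem_filter, Finset.mem_univ, true_and] at hp
    obtain ⟨hv, hs, hadj⟩ := hp
    by_contra hle
    push_neg at hle
    have h1 : M.lo p.2 ≤ M.hi p.1 := by
      have := le_max_left (M.lo p.2 - M.hi p.1) (M.lo p.1 - M.hi p.2)
      linarith [this.trans hle]
    have h2 : M.lo p.1 ≤ M.hi p.2 := by
      have := le_max_right (M.lo p.2 - M.hi p.1) (M.lo p.1 - M.hi p.2)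
      linarith [this.trans hle]
    have : (max (M.lo p.1) (M.lo p.2)) ∈
        Set.Icc (M.lo p.1) (M.hi p.1) ∩ Set.Icc (M.lo p.2) (M.hi p.2) := by
      constructor
      · exact Set.mem_Icc.mpr ⟨le_max_left _ _, max_le (M.lo_le_hi p.1) h1⟩
      · exact Set.mem_Icc.mpr ⟨le_max_right _ _, max_le h2 (M.lo_le_hi p.2)⟩
    rw [hdisj p.1 p.2 hv hs hadj] at this
    exact this
  set ε : ℝ := if hPne : P.Nonempty then (P.inf' hPne d) / 2 else 1 with hε
  have hεpos : 0 < ε := by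
    rw [hε]
    split_ifs with hPne
    · obtain ⟨p, hp, hpd⟩ := Finset.exists_mem_eq_inf' hPne d
      rw [hpd]
      linarith [hdpos p hp]
    · norm_num
  have hεle : ∀ v s : V, v ∈ K → s ∈ S → G.Adj v s → 2 * ε ≤ d (v, s) := by
    intro v s hv hs hadj
    have hmem : (v, s) ∈ P := by
      simp only [hP, Finset.mem_filter, Finset.mem_univ, true_and]
      exact ⟨hv, hs, hadj⟩
    have hPne : P.Nonempty := ⟨(v, s), hmem⟩
    rw [hε]
    rw [dif_pos hPne]
    linarith [Finset.inf'_le d hmem]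
  have hF4 : ∀ v s : V, v ∈ K → s ∈ S → G.Adj v s →
      q s < M.lo v - ε ∨ M.hi v + ε < q s := by
    intro v s hv hs hadj
    have h2ε := hεle v s hv hs hadj
    rw [hd] at h2ε
    simp only at h2ε
    rcases max_cases (M.lo s - M.hi v) (M.lo v - M.hi s) with ⟨heq, -⟩ | ⟨heq, -⟩
    · right
      rw [heq] at h2ε
      linarith [(hq_in s hs).1, hεpos]
    · left
      rw [heq] at h2ε
      linarith [(hq_in s hs).2, hεpos]
  have hF5 : ∀ v s : V, v ∈ K → s ∈ S → ¬ G.Adj v s →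
      M.lo v - ε < q s ∧ q s < M.hi v + ε := by
    intro v s hv hs hnadj
    have hadjH : H.Adj s v := ((aux_adj_KS hKS hv hs).mpr hnadj).symm
    have hvT : v ∈ T s := (hmemT s v).mpr (Or.inr hadjH)
    obtain ⟨h1, h2⟩ := hqmem s hs v hvT
    exact ⟨by linarith, by linarith⟩
  -- rescaling into (0,1)
  set vals : Finset ℝ := (Finset.univ.image (fun v : V => M.lo v - ε)) ∪
    (Finset.univ.image (fun v : V => M.hi v + ε)) ∪ (Finset.univ.image q) with hvals
  have hvalsne : vals.Nonempty := by
    obtain ⟨v⟩ := hV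
    exact ⟨q v, by simp [hvals]⟩
  set m : ℝ := vals.min' hvalsne with hm
  set B : ℝ := vals.max' hvalsne with hB
  have hmB : m ≤ B := by
    obtain ⟨e, he⟩ := hvalsne
    exact le_trans (Finset.min'_le _ e he) (Finset.le_max' _ e he)
  set D : ℝ := B - m + 2 with hD
  have hDpos : 0 < D := by rw [hD]; linarith
  set φ : ℝ → ℝ := fun x => (x - m + 1) / D with hφ
  have hφmono : ∀ x y : ℝ, x < y → φ x < φ y := by
    intro x y hxy
    rw [hφ]
    apply div_lt_div_of_pos_right (by linarith) hDpos
  have hφinj : ∀ x y : ℝ, φ x = φ y → x = y := by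
    intro x y hxy
    rcases lt_trichotomy x y with h' | h' | h'
    · exact absurd hxy (ne_of_lt (hφmono x y h'))
    · exact h'
    · exact absurd hxy.symm (ne_of_lt (hφmono y x h'))
  have hbound : ∀ t ∈ vals, 0 < φ t ∧ φ t < 1 := by
    intro t ht
    have h1 : m ≤ t := Finset.min'_le _ t ht
    have h2 : t ≤ B := Finset.le_max' _ t ht
    constructor
    · exact div_pos (by linarith) hDpos
    · rw [hφ]
      simp only
      rw [div_lt_one hDpos]
      rw [hD]
      linarith
  have hlov : ∀ v : V, M.lo v - ε ∈ vals := by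
    intro v
    simp only [hvals, Finset.mem_union, Finset.mem_image]
    exact Or.inl (Or.inl ⟨v, Finset.mem_univ v, rfl⟩)
  have hhiv : ∀ v : V, M.hi v + ε ∈ vals := by
    intro v
    simp only [hvals, Finset.mem_union, Finset.mem_image]
    exact Or.inl (Or.inr ⟨v, Finset.mem_univ v, rfl⟩)
  have hqv : ∀ v : V, q v ∈ vals := by
    intro v
    simp only [hvals, Finset.mem_union, Finset.mem_image]
    exact Or.inr ⟨v, Finset.mem_univ v, rfl⟩
  set L : V → ℝ := fun v => φ (M.lo v - ε) with hL
  set Hf : V → ℝ := fun v => φ (M.hi v + ε) with hHf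
  set Q : V → ℝ := fun s => φ (q s) with hQ
  have hL0 : ∀ v : V, 0 < L v := fun v => (hbound _ (hlov v)).1
  have hL1 : ∀ v : V, L v < 1 := fun v => (hbound _ (hlov v)).2
  have hH0 : ∀ v : V, 0 < Hf v := fun v => (hbound _ (hhiv v)).1
  have hH1 : ∀ v : V, Hf v < 1 := fun v => (hbound _ (hhiv v)).2
  have hQ0 : ∀ v : V, 0 < Q v := fun v => (hbound _ (hqv v)).1
  have hQ1 : ∀ v : V, Q v < 1 := fun v => (hbound _ (hqv v)).2
  have hLH : ∀ v : V, L v < Hf v := fun v =>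
    hφmono _ _ (by linarith [M.lo_le_hi v, hεpos])
  set arc : V → Set Circle :=
    fun u => if u ∈ K then circleArc (Hf u) (1 - (Hf u - L u)) else circleArc (Q u) 0
    with harc
  have harcK : ∀ v ∈ K, arc v = circleArc (Hf v) (1 - (Hf v - L v)) := by
    intro v hv
    simp only [harc, if_pos hv]
  have harcS : ∀ u : V, u ∉ K → arc u = {((Q u : ℝ) : Circle)} := by
    intro u hu
    simp only [harc, if_neg hu]
    exact circleArc_zero (Q u)
  have hmemK : ∀ v : V, v ∈ K → ∀ x : ℝ, 0 < x → x ≤ 1 →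
      (((x : ℝ) : Circle) ∈ arc v ↔ (x ≤ L v ∨ Hf v ≤ x)) := by
    intro v hv x hx0 hx1
    rw [harcK v hv]
    rw [mem_circleArc]
    constructor
    · rintro ⟨k, hk⟩
      simp only [Set.mem_Icc] at hk
      have hk1 : (-1 : ℝ) < (k : ℤ) := by
        push_cast
        nlinarith [hH0 v, hk.1]
      have hk2 : ((k : ℤ) : ℝ) < 2 := by
        push_cast
        nlinarith [hL1 v, hk.2]
      have hk1' : (0 : ℤ) ≤ k := by
        have : (-1 : ℤ) < k := by exact_mod_cast hk1
        omega
      have hk2' : k ≤ 1 := by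
        have : k < (2 : ℤ) := by exact_mod_cast hk2
        omega
      interval_cases k
      · right
        push_cast at hk
        linarith [hk.1]
      · left
        push_cast at hk
        linarith [hk.2]
    · rintro (h' | h')
      · exact ⟨1, by simp only [Set.mem_Icc]; push_cast; constructor <;> linarith [hH1 v]⟩
      · exact ⟨0, by simp only [Set.mem_Icc]; push_cast; constructor <;> linarith [hL0 v]⟩
  have hone_mem : ∀ v ∈ K, ((1 : ℝ) : Circle) ∈ arc v := fun v hv =>
    (hmemK v hv 1 one_pos le_rfl).mpr (Or.inr (le_of_lt (hH1 v)))
  have hKSmem : ∀ v s : V, v ∈ K → s ∈ S →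
      (((Q s : ℝ) : Circle) ∈ arc v ↔ G.Adj v s) := by
    intro v s hv hs
    rw [hmemK v hv (Q s) (hQ0 s) (le_of_lt (hQ1 s))]
    by_cases hadj : G.Adj v s
    · rcases hF4 v s hv hs hadj with h' | h'
      · exact iff_of_true (Or.inl (le_of_lt (hφmono _ _ h'))) hadj
      · exact iff_of_true (Or.inr (le_of_lt (hφmono _ _ h'))) hadj
    · obtain ⟨h1, h2⟩ := hF5 v s hv hs hadj
      refine iff_of_false ?_ hadj
      push_neg
      exact ⟨hφmono _ _ h1, hφmono _ _ h2⟩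
  have hQne : ∀ s t : V, s ∈ S → t ∈ S → s ≠ t →
      ((Q s : ℝ) : Circle) ≠ ((Q t : ℝ) : Circle) := by
    intro s t hs ht hst heq
    obtain ⟨k, hk⟩ := coe_eq_coe.mp heq
    have hk1 : (-1 : ℝ) < (k : ℤ) := by push_cast; nlinarith [hQ0 s, hQ0 t, hQ1 s, hQ1 t]
    have hk2 : ((k : ℤ) : ℝ) < 1 := by push_cast; nlinarith [hQ0 s, hQ0 t, hQ1 s, hQ1 t]
    have hk0 : k = 0 := by
      have h1' : (-1 : ℤ) < k := by exact_mod_cast hk1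
      have h2' : k < (1 : ℤ) := by exact_mod_cast hk2
      omega
    rw [hk0] at hk
    push_cast at hk
    exact hqinj s t hs ht hst (hφinj _ _ (by linarith))
  have hKSfull : ∀ u v : V, u ∈ K → v ∈ S → (G.Adj u v ↔ (arc u ∩ arc v).Nonempty) := by
    intro u v hu hv
    rw [harcS v (split_not_mem_K hKS hv)]
    constructor
    · intro hadj
      exact ⟨((Q v : ℝ) : Circle), (hKSmem u v hu hv).mpr hadj, rfl⟩
    · rintro ⟨p, hp1, hp2⟩
      rw [Set.mem_singleton_iff] at hp2
      subst hp2
      exact (hKSmem u v hu hv).mp hp1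
  refine ⟨⟨arc, ?_, ?_⟩, ?_⟩
  · intro v
    by_cases hv : v ∈ K
    · exact ⟨Hf v, 1 - (Hf v - L v), by linarith [hH1 v, hL0 v], harcK v hv⟩
    · refine ⟨Q v, 0, le_rfl, ?_⟩
      simp only [harc, if_neg hv]
  · intro u v huv
    rcases split_mem_or hKS u with hu | hu <;> rcases split_mem_or hKS v with hv | hv
    · exact iff_of_true (hKS.2.2.1 hu hv huv)
        ⟨((1 : ℝ) : Circle), hone_mem u hu, hone_mem v hv⟩
    · exact hKSfull u v hu hv
    · rw [G.adj_comm, Set.inter_comm]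
      exact hKSfull v u hv hu
    · refine iff_of_false (hKS.2.2.2 hu hv huv) ?_
      rintro ⟨p, hp1, hp2⟩
      rw [harcS u (split_not_mem_K hKS hu), Set.mem_singleton_iff] at hp1
      rw [harcS v (split_not_mem_K hKS hv), Set.mem_singleton_iff] at hp2
      exact hQne u v hu hv huv (hp1 ▸ hp2 ▸ rfl)
  · intro C hC
    show ∃ p : Circle, ∀ v ∈ C, p ∈ arc v
    by_cases hCS : ∃ s ∈ C, s ∈ S
    · obtain ⟨t, htC, htS⟩ := hCS
      refine ⟨((Q t : ℝ) : Circle), fun x hx => ?_⟩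
      by_cases hxt : x = t
      · subst hxt
        rw [harcS x (split_not_mem_K hKS htS)]
        rfl
      · have hadj : G.Adj x t := hC.1 hx htC hxt
        rcases split_mem_or hKS x with hxK | hxS
        · exact (hKSmem x t hxK htS).mpr hadj
        · exact absurd hadj (hKS.2.2.2 hxS htS hxt)
    · refine ⟨((1 : ℝ) : Circle), fun x hx => ?_⟩
      rcases split_mem_or hKS x with hxK | hxS
      · exact hone_mem x hxK
      · exact absurd ⟨x, hx, hxS⟩ hCS

lemma forward_dir {V : Type*} [Fintype V] {G : SimpleGraph V} {K S : Set V}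
    (hKS : IsSplitPartition G K S) (h : IsHellyCircularArcGraph G) :
    IsIntervalGraph (auxGraph G K) := by
  classical
  obtain ⟨M, hHelly⟩ := h
  obtain ⟨C, hKC, hCmax⟩ := exists_maxclique_supset G hKS.2.2.1
  obtain ⟨p, hp⟩ := hHelly C hCmax
  obtain ⟨c, hc⟩ := QuotientAddGroup.mk_surjective p
  -- Helly points for the closed neighbourhoods of independent vertices
  have hpt : ∀ s : V, ∃ qcs : Circle, s ∈ S →
      (qcs ∈ M.arc s ∧ ∀ v : V, G.Adj v s → qcs ∈ M.arc v) := by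
    intro s
    by_cases hs : s ∈ S
    · obtain ⟨qcs, hqcs⟩ := hHelly _ (split_maxclique_closedNbhd hKS hs)
      refine ⟨qcs, fun _ => ⟨hqcs s (mem_closedNbhd.mpr (Or.inl rfl)), fun v hadj => ?_⟩⟩
      exact hqcs v (mem_closedNbhd.mpr (Or.inr hadj.symm))
    · exact ⟨((0 : ℝ) : Circle), fun hs' => absurd hs' hs⟩
  choose qc hqc using hpt
  have hkey : ∀ v s : V, v ∈ K → s ∈ S → (G.Adj v s ↔ qc s ∈ M.arc v) := by
    intro v s hv hs
    constructor
    · exact fun hadj => (hqc s hs).2 v hadj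
    · intro hmem
      by_contra hnadj
      have hdisj := (M.adj_iff v s (split_ne hKS hv hs))
      rw [iff_false_intro hnadj, false_iff, Set.not_nonempty_iff_eq_empty] at hdisj
      have : qc s ∈ M.arc v ∩ M.arc s := ⟨hmem, (hqc s hs).1⟩
      rw [hdisj] at this
      exact this
  -- independent vertices whose arc contains p are adjacent to all of K
  have hsC : ∀ s : V, s ∈ S → p ∈ M.arc s → ∀ v ∈ K, G.Adj v s := by
    intro s hs hps v hv
    have hsC' : s ∈ C := by
      by_contra hsnC
      have hclq : G.IsClique (insert s C) := by
        intro a ha b hb hab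
        rcases Set.mem_insert_iff.mp ha with rfl | haC
        · rcases Set.mem_insert_iff.mp hb with rfl | hbC
          · exact absurd rfl hab
          · exact (M.adj_iff a b hab).mpr ⟨p, hps, hp b hbC⟩
        · rcases Set.mem_insert_iff.mp hb with rfl | hbC
          · exact (M.adj_iff a b hab).mpr ⟨p, hp a haC, hps⟩
          · exact hCmax.1 haC hbC hab
      have := hCmax.2 _ hclq (Set.subset_insert s C)
      exact hsnC (this ▸ Set.mem_insert s C)
    exact hCmax.1 (hKC hv) hsC' (split_ne hKS hv hs)
  -- coordinates on the line cut at p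
  have hxe : ∀ s : V, ∃ xs : ℝ, (s ∈ S ∧ p ∉ M.arc s) →
      (c < xs ∧ xs < c + 1 ∧ ((xs : ℝ) : Circle) = qc s) := by
    intro s
    by_cases hs : s ∈ S ∧ p ∉ M.arc s
    · have hne : qc s ≠ ((c : ℝ) : Circle) := by
        rw [hc]
        intro heq
        exact hs.2 (heq ▸ (hqc s hs.1).1)
      obtain ⟨xs, h1, h2, h3⟩ := exists_rep_Ioo hne
      exact ⟨xs, fun _ => ⟨h1, h2, h3⟩⟩
    · exact ⟨0, fun hs' => absurd hs' hs⟩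
  choose x hx using hxe
  -- convexity of the complement of each K-arc on the cut line
  have hconv : ∀ v : V, v ∈ K → ∀ x1 x2 z : ℝ, c < x1 → x2 < c + 1 → x1 ≤ z → z ≤ x2 →
      ((x1 : ℝ) : Circle) ∉ M.arc v → ((x2 : ℝ) : Circle) ∉ M.arc v →
      ((z : ℝ) : Circle) ∉ M.arc v := by
    intro v hv x1 x2 z h1 h2 h3 h4 h5 h6
    have hpc : ((c : ℝ) : Circle) ∈ M.arc v := by
      rw [hc]
      exact hp v (hKC hv)
    obtain ⟨a, ℓ, hℓ, harcv⟩ := M.isArc v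
    rw [harcv] at hpc h5 h6 ⊢
    exact arc_convex hpc h1 h2 h3 h4 h5 h6
  -- far points for isolated vertices
  set e : V → ℝ := fun u => c + 2 + ((Fintype.equivFin V) u : ℕ) with he
  have hegt : ∀ u : V, c + 2 ≤ e u := by
    intro u
    rw [he]
    simp only [le_add_iff_nonneg_right]
    positivity
  have heinj : ∀ u u' : V, e u = e u' → u = u' := by
    intro u u' heq
    rw [he] at heq
    simp only [add_right_inj] at heq
    exact (Fintype.equivFin V).injective (Fin.ext (by exact_mod_cast heq))
  set Qf : V → Finset V :=
    fun v => Finset.univ.filter (fun t => (t ∈ S ∧ p ∉ M.arc t) ∧ ¬ G.Adj v t) with hQf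
  have hQfmem : ∀ v t : V, t ∈ Qf v ↔ ((t ∈ S ∧ p ∉ M.arc t) ∧ ¬ G.Adj v t) := by
    intro v t
    simp [hQf]
  set Qx : V → Finset ℝ := fun v => (Qf v).image x with hQxdef
  have hQxprop : ∀ v : V, v ∈ K → ∀ y ∈ Qx v,
      c < y ∧ y < c + 1 ∧ ((y : ℝ) : Circle) ∉ M.arc v := by
    intro v hv y hy
    rw [hQxdef] at hy
    simp only [Finset.mem_image] at hy
    obtain ⟨t, ht, rfl⟩ := hy
    obtain ⟨htc, hnadj⟩ := (hQfmem v t).mp ht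
    obtain ⟨h1, h2, h3⟩ := hx t htc
    refine ⟨h1, h2, ?_⟩
    rw [h3]
    intro hmem
    exact hnadj ((hkey v t hv htc.1).mpr hmem)
  set lo : V → ℝ := fun u =>
    if hu : u ∈ K then (if hn : (Qx u).Nonempty then (Qx u).min' hn else e u)
    else (if u ∈ S ∧ p ∉ M.arc u then x u else e u) with hlo
  set hi : V → ℝ := fun u =>
    if hu : u ∈ K then (if hn : (Qx u).Nonempty then (Qx u).max' hn else e u)
    else (if u ∈ S ∧ p ∉ M.arc u then x u else e u) with hhi
  have heqK1 : ∀ u : V, u ∈ K → ∀ hn : (Qx u).Nonempty,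
      lo u = (Qx u).min' hn ∧ hi u = (Qx u).max' hn := by
    intro u hu hn
    rw [hlo, hhi]
    simp only
    rw [dif_pos hu, dif_pos hu, dif_pos hn, dif_pos hn]
    exact ⟨rfl, rfl⟩
  have heqK0 : ∀ u : V, u ∈ K → ¬ (Qx u).Nonempty → lo u = e u ∧ hi u = e u := by
    intro u hu hn
    rw [hlo, hhi]
    simp only
    rw [dif_pos hu, dif_pos hu, dif_neg hn, dif_neg hn]
    exact ⟨rfl, rfl⟩
  have heqS1 : ∀ u : V, u ∉ K → (u ∈ S ∧ p ∉ M.arc u) → lo u = x u ∧ hi u = x u := by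
    intro u hu hcond
    rw [hlo, hhi]
    simp only
    rw [dif_neg hu, dif_neg hu, if_pos hcond]
    exact ⟨rfl, rfl⟩
  have heqS0 : ∀ u : V, u ∉ K → ¬ (u ∈ S ∧ p ∉ M.arc u) → lo u = e u ∧ hi u = e u := by
    intro u hu hcond
    rw [hlo, hhi]
    simp only
    rw [dif_neg hu, dif_neg hu, if_neg hcond]
    exact ⟨rfl, rfl⟩
  have hhull : ∀ u : V, u ∈ K → ∀ hn : (Qx u).Nonempty, ∀ z : ℝ,
      (Qx u).min' hn ≤ z → z ≤ (Qx u).max' hn →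
      (c < z ∧ z < c + 1 ∧ ((z : ℝ) : Circle) ∉ M.arc u) := by
    intro u hu hn z h1 h2
    obtain ⟨a1, a2, a3⟩ := hQxprop u hu _ (Finset.min'_mem _ hn)
    obtain ⟨b1, b2, b3⟩ := hQxprop u hu _ (Finset.max'_mem _ hn)
    exact ⟨lt_of_lt_of_le a1 h1, lt_of_le_of_lt h2 b2, hconv u hu _ _ z a1 b2 h1 h2 a3 b3⟩
  -- the interval model
  refine ⟨⟨lo, hi, ?_, ?_⟩⟩
  · intro u
    by_cases hu : u ∈ K
    · by_cases hn : (Qx u).Nonempty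
      · obtain ⟨h1, h2⟩ := heqK1 u hu hn
        rw [h1, h2]
        exact Finset.min'_le _ _ (Finset.max'_mem _ hn)
      · obtain ⟨h1, h2⟩ := heqK0 u hu hn
        rw [h1, h2]
    · by_cases hcond : u ∈ S ∧ p ∉ M.arc u
      · obtain ⟨h1, h2⟩ := heqS1 u hu hcond
        rw [h1, h2]
      · obtain ⟨h1, h2⟩ := heqS0 u hu hcond
        rw [h1, h2]
  · -- adjacency
    have hKScase : ∀ u v : V, u ∈ K → v ∈ S →
        ((auxGraph G K).Adj u v ↔ (Set.Icc (lo u) (hi u) ∩ Set.Icc (lo v) (hi v)).Nonempty) := by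
      intro u v hu hv
      have hvK : v ∉ K := split_not_mem_K hKS hv
      rw [aux_adj_KS hKS hu hv]
      by_cases hvp : p ∈ M.arc v
      · -- v is adjacent to all of K; its interval is a far point
        obtain ⟨h1, h2⟩ := heqS0 v hvK (fun hcond => hcond.2 hvp)
        rw [h1, h2]
        refine iff_of_false (fun hn => hn (hsC v hv hvp u hu)) ?_
        rintro ⟨z, hz1, hz2⟩
        simp only [Set.mem_Icc] at hz1 hz2
        have hze : z = e v := le_antisymm hz2.2 hz2.1
        by_cases hn : (Qx u).Nonempty
        · obtain ⟨g1, g2⟩ := heqK1 u hu hn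
          rw [g1, g2] at hz1
          have := (hhull u hu hn z hz1.1 hz1.2).2.1
          linarith [hegt v]
        · obtain ⟨g1, g2⟩ := heqK0 u hu hn
          rw [g1, g2] at hz1
          have : z = e u := le_antisymm hz1.2 hz1.1
          exact absurd (heinj u v (this ▸ hze)) (split_ne hKS hu hv)
      · -- v has a point coordinate
        have hcond : v ∈ S ∧ p ∉ M.arc v := ⟨hv, hvp⟩
        obtain ⟨h1, h2⟩ := heqS1 v hvK hcond
        rw [h1, h2]
        obtain ⟨hxc1, hxc2, hxc3⟩ := hx v hcond
        by_cases hn : (Qx u).Nonempty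
        · obtain ⟨g1, g2⟩ := heqK1 u hu hn
          rw [g1, g2]
          constructor
          · intro hnadj
            have hvQ : x v ∈ Qx u := by
              rw [hQxdef]
              exact Finset.mem_image_of_mem x ((hQfmem u v).mpr ⟨hcond, hnadj⟩)
            exact ⟨x v, Set.mem_Icc.mpr ⟨Finset.min'_le _ _ hvQ, Finset.le_max' _ _ hvQ⟩,
              Set.mem_Icc.mpr ⟨le_rfl, le_rfl⟩⟩
          · rintro ⟨z, hz1, hz2⟩
            simp only [Set.mem_Icc] at hz1 hz2
            have hze : z = x v := le_antisymm hz2.2 hz2.1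
            rw [hze] at hz1
            have := (hhull u hu hn (x v) hz1.1 hz1.2).2.2
            rw [hxc3] at this
            intro hadj
            exact this ((hkey u v hu hv).mp hadj)
        · obtain ⟨g1, g2⟩ := heqK0 u hu hn
          rw [g1, g2]
          refine iff_of_false ?_ ?_
          · intro hnadj
            exact hn ⟨x v, by
              rw [hQxdef]
              exact Finset.mem_image_of_mem x ((hQfmem u v).mpr ⟨hcond, hnadj⟩)⟩
          · rintro ⟨z, hz1, hz2⟩
            simp only [Set.mem_Icc] at hz1 hz2
            linarith [hegt u]
    intro u v huv
    rcases split_mem_or hKS u with hu | hu <;> rcases split_mem_or hKS v with hv | hv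
    · -- both in K
      rw [aux_adj_KK hKS hu hv huv]
      have hwitQ : ∀ s : V, s ∈ S → ¬ G.Adj u s → ¬ G.Adj v s → (s ∈ Qf u ∧ s ∈ Qf v) := by
        intro s hs h1 h2
        have hsp : p ∉ M.arc s := fun hps => h1 (hsC s hs hps u hu)
        exact ⟨(hQfmem u s).mpr ⟨⟨hs, hsp⟩, h1⟩, (hQfmem v s).mpr ⟨⟨hs, hsp⟩, h2⟩⟩
      by_cases hnu : (Qx u).Nonempty
      · by_cases hnv : (Qx v).Nonempty
        · obtain ⟨g1, g2⟩ := heqK1 u hu hnu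
          obtain ⟨g3, g4⟩ := heqK1 v hv hnv
          rw [g1, g2, g3, g4]
          constructor
          · rintro ⟨s, hs, h1, h2⟩
            obtain ⟨hQ1, hQ2⟩ := hwitQ s hs h1 h2
            have hm1 : x s ∈ Qx u := hQxdef ▸ Finset.mem_image_of_mem x hQ1
            have hm2 : x s ∈ Qx v := hQxdef ▸ Finset.mem_image_of_mem x hQ2
            exact ⟨x s, Set.mem_Icc.mpr ⟨Finset.min'_le _ _ hm1, Finset.le_max' _ _ hm1⟩,
              Set.mem_Icc.mpr ⟨Finset.min'_le _ _ hm2, Finset.le_max' _ _ hm2⟩⟩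
          · rintro ⟨z, hz1, hz2⟩
            simp only [Set.mem_Icc] at hz1 hz2
            by_cases hcmp : (Qx u).min' hnu ≤ (Qx v).min' hnv
            · -- min' of v lies in the hull of u
              obtain ⟨t, ht, hteq⟩ :=
                Finset.mem_image.mp (show (Qx v).min' hnv ∈ (Qf v).image x from
                  Finset.min'_mem _ hnv)
              obtain ⟨htc, htnadj⟩ := (hQfmem v t).mp ht
              have hin : ((x t : ℝ) : Circle) ∉ M.arc u := by
                have ha : (Qx u).min' hnu ≤ x t := by rw [hteq]; exact hcmp
                have hb : x t ≤ (Qx u).max' hnu := by rw [hteq]; exact le_trans hz2.1 hz1.2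
                exact (hhull u hu hnu (x t) ha hb).2.2
              have hnadju : ¬ G.Adj u t := by
                intro hadj
                rw [(hx t htc).2.2] at hin
                exact hin ((hkey u t hu htc.1).mp hadj)
              exact ⟨t, htc.1, hnadju, htnadj⟩
            · push_neg at hcmp
              obtain ⟨t, ht, hteq⟩ :=
                Finset.mem_image.mp (show (Qx u).min' hnu ∈ (Qf u).image x from
                  Finset.min'_mem _ hnu)
              obtain ⟨htc, htnadj⟩ := (hQfmem u t).mp ht
              have hin : ((x t : ℝ) : Circle) ∉ M.arc v := by
                have ha : (Qx v).min' hnv ≤ x t := by rw [hteq]; exact hcmp.le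
                have hb : x t ≤ (Qx v).max' hnv := by rw [hteq]; exact le_trans hz1.1 hz2.2
                exact (hhull v hv hnv (x t) ha hb).2.2
              have hnadjv : ¬ G.Adj v t := by
                intro hadj
                rw [(hx t htc).2.2] at hin
                exact hin ((hkey v t hv htc.1).mp hadj)
              exact ⟨t, htc.1, htnadj, hnadjv⟩
        · obtain ⟨g1, g2⟩ := heqK1 u hu hnu
          obtain ⟨g3, g4⟩ := heqK0 v hv hnv
          rw [g1, g2, g3, g4]
          refine iff_of_false ?_ ?_
          · rintro ⟨s, hs, h1, h2⟩
            exact hnv ⟨x s, hQxdef ▸ Finset.mem_image_of_mem x (hwitQ s hs h1 h2).2⟩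
          · rintro ⟨z, hz1, hz2⟩
            simp only [Set.mem_Icc] at hz1 hz2
            have := (hhull u hu hnu z hz1.1 hz1.2).2.1
            linarith [hegt v]
      · obtain ⟨g1, g2⟩ := heqK0 u hu hnu
        rw [g1, g2]
        refine iff_of_false ?_ ?_
        · rintro ⟨s, hs, h1, h2⟩
          exact hnu ⟨x s, hQxdef ▸ Finset.mem_image_of_mem x (hwitQ s hs h1 h2).1⟩
        · rintro ⟨z, hz1, hz2⟩
          simp only [Set.mem_Icc] at hz1 hz2
          have hze : z = e u := le_antisymm hz1.2 hz1.1
          by_cases hnv : (Qx v).Nonempty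
          · obtain ⟨g3, g4⟩ := heqK1 v hv hnv
            rw [g3, g4] at hz2
            have := (hhull v hv hnv z hz2.1 hz2.2).2.1
            linarith [hegt u]
          · obtain ⟨g3, g4⟩ := heqK0 v hv hnv
            rw [g3, g4] at hz2
            have hze' : z = e v := le_antisymm hz2.2 hz2.1
            exact huv (heinj u v (hze ▸ hze' ▸ rfl))
    · exact hKScase u v hu hv
    · rw [(auxGraph G K).adj_comm, Set.inter_comm]
      exact hKScase v u hv hu
    · -- both in S
      refine iff_of_false (aux_adj_SS hKS hu hv) ?_
      rintro ⟨z, hz1, hz2⟩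
      simp only [Set.mem_Icc] at hz1 hz2
      have huK : u ∉ K := split_not_mem_K hKS hu
      have hvK : v ∉ K := split_not_mem_K hKS hv
      by_cases hcu : u ∈ S ∧ p ∉ M.arc u
      · obtain ⟨g1, g2⟩ := heqS1 u huK hcu
        rw [g1, g2] at hz1
        have hzu : z = x u := le_antisymm hz1.2 hz1.1
        by_cases hcv : v ∈ S ∧ p ∉ M.arc v
        · obtain ⟨g3, g4⟩ := heqS1 v hvK hcv
          rw [g3, g4] at hz2
          have hzv : z = x v := le_antisymm hz2.2 hz2.1
          have hxeq : x u = x v := hzu ▸ hzv ▸ rfl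
          have harcdisj := (M.adj_iff u v huv)
          rw [iff_false_intro (hKS.2.2.2 hu hv huv), false_iff,
            Set.not_nonempty_iff_eq_empty] at harcdisj
          have hqu : qc u ∈ M.arc u := (hqc u hu).1
          have hqv : qc v ∈ M.arc v := (hqc v hv).1
          have : qc u ∈ M.arc u ∩ M.arc v := by
            refine ⟨hqu, ?_⟩
            rw [← (hx u hcu).2.2, hxeq, (hx v hcv).2.2]
            exact hqv
          rw [harcdisj] at this
          exact this
        · obtain ⟨g3, g4⟩ := heqS0 v hvK hcv
          rw [g3, g4] at hz2
          have := (hx u hcu).2.1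
          linarith [hegt v, hz2.1]
      · obtain ⟨g1, g2⟩ := heqS0 u huK hcu
        rw [g1, g2] at hz1
        have hzu : z = e u := le_antisymm hz1.2 hz1.1
        by_cases hcv : v ∈ S ∧ p ∉ M.arc v
        · obtain ⟨g3, g4⟩ := heqS1 v hvK hcv
          rw [g3, g4] at hz2
          have := (hx v hcv).2.1
          linarith [hegt u, hz1.1]
        · obtain ⟨g3, g4⟩ := heqS0 v hvK hcv
          rw [g3, g4] at hz2
          have hzv : z = e v := le_antisymm hz2.2 hz2.1
          exact huv (heinj u v (hzu ▸ hzv ▸ rfl))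

end Helpers

/-- A split graph `G` with split partition `K ⊎ S` is a Helly
circular-arc graph iff the auxiliary graph `G^K` is an interval graph. -/
theorem statement2 {V : Type*} [Fintype V] (G : SimpleGraph V) (K S : Set V)
    (hKS : IsSplitPartition G K S) :
    IsHellyCircularArcGraph G ↔ IsIntervalGraph (auxGraph G K) :=
  ⟨fun h => forward_dir hKS h, fun h => backward_dir hKS h⟩

end CAG
end

section
/- Let G be a circular-arc graph and s a simplicial vertex of G. In every normalized circular-arc model of G there is a point of the circle that is covered exactly by the arcs of the vertices of N[s]. -/
namespace CAG

variable {V : Type*}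

/-- Let `G` be a circular-arc graph and `s` a simplicial vertex.  In
every normalized circular-arc model of `G` there is a point covered exactly by the
arcs of the vertices of `N[s]`. -/
theorem statement4 {V : Type*} [Fintype V] (G : SimpleGraph V) (s : V)
    (hs : IsSimplicial G s) (M : CircularArcModel G) (hM : IsNormalized M) :
    ∃ p : Circle, ∀ v : V, p ∈ M.arc v ↔ v ∈ closedNbhd G s := by
  obtain ⟨a, ℓ, hℓ, harc⟩ := M.isArc s
  have hne : (M.arc s).Nonempty := by
    rw [harc]
    exact ⟨((a : ℝ) : Circle), a, ⟨le_refl a, by linarith⟩, rfl⟩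
  obtain ⟨p, hp⟩ := hne
  refine ⟨p, fun v => ⟨fun hpv => ?_, fun hv => ?_⟩⟩
  · by_cases hvs : v = s
    · subst hvs; exact Set.mem_insert _ _
    · have hadj : G.Adj v s := (M.adj_iff v s hvs).mpr ⟨p, hpv, hp⟩
      exact Set.mem_insert_of_mem _ hadj.symm
  · rcases hv with rfl | hv
    · exact hp
    · have hadj : G.Adj v s := hv.symm
      have hsub : closedNbhd G s ⊆ closedNbhd G v := by
        intro u hu
        rcases hu with rfl | hu2
        · exact Set.mem_insert_of_mem _ hadj
        · by_cases huv : u = v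
          · subst huv; exact Set.mem_insert _ _
          · have : G.Adj u v := hs (Set.mem_insert_of_mem _ hu2)
              (Set.mem_insert_of_mem _ hadj.symm) huv
            exact Set.mem_insert_of_mem _ this.symm
      exact (hM v s hadj).1 hsub hp

end CAG
end

section
/- Let G be a chordal graph, K a clique of G, and x a simplicial vertex of G with x ∉ K. Then x is a simplicial vertex of the auxiliary graph G^K. -/
namespace CAG

variable {V : Type*}

/-- Let `G` be a chordal graph, `K` a clique and `x ∉ K` a simplicial
vertex of `G`.  Then `x` is simplicial in the auxiliary graph `G^K`. -/
theorem statement5 {V : Type*} [Fintype V] (G : SimpleGraph V) (hG : Chordal G)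
    (K : Set V) (hK : G.IsClique K) (x : V) (hx : IsSimplicial G x) (hxK : x ∉ K) :
    IsSimplicial (auxGraph G K) x := by
  -- characterize membership in the closed aux-neighbourhood of x
  have hchar : ∀ a ∈ closedNbhd (auxGraph G K) x,
      a = x ∨ (a ∉ K ∧ G.Adj x a) ∨ (a ∈ K ∧ ¬ closedNbhd G x ⊆ closedNbhd G a) := by
    intro a ha
    rcases ha with rfl | ha
    · exact Or.inl rfl
    · rcases ha.2 with ⟨hxK', _, _⟩ | ⟨hxK', haK, hadj⟩ | ⟨hxK', _, _⟩ | ⟨haK, hxK', hsub⟩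
      · exact absurd hxK' hxK
      · exact Or.inr (Or.inl ⟨haK, hadj⟩)
      · exact absurd hxK' hxK
      · exact Or.inr (Or.inr ⟨haK, hsub⟩)
  -- mixed fact: u ∈ K with ¬N[x]⊆N[u], v ∉ K in N_G[x]  ⇒  ¬N[v]⊆N[u]
  have hmixed : ∀ u ∈ K, ¬ closedNbhd G x ⊆ closedNbhd G u →
      ∀ v, (v = x ∨ G.Adj x v) → ¬ closedNbhd G v ⊆ closedNbhd G u := by
    intro u _ hsub v hv hvu
    rcases hv with rfl | hv
    · exact hsub hvu
    · apply hsub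
      intro w hw
      apply hvu
      by_cases hwv : w = v
      · exact Set.mem_insert_iff.mpr (Or.inl hwv)
      · have hadj : G.Adj w v := hx hw (Set.mem_insert_of_mem _ hv) hwv
        exact Set.mem_insert_of_mem _ hadj.symm
  refine fun u hu v hv huv => ⟨huv, ?_⟩
  rcases hchar u hu with rfl | ⟨huK, huadj⟩ | ⟨huK, husub⟩ <;>
    rcases hchar v hv with rfl | ⟨hvK, hvadj⟩ | ⟨hvK, hvsub⟩
  · exact absurd rfl huv
  · exact Or.inr (Or.inl ⟨hxK, hvK, hvadj⟩)
  · exact Or.inr (Or.inr (Or.inr ⟨hvK, hxK, hvsub⟩))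
  · exact Or.inr (Or.inl ⟨huK, hxK, huadj.symm⟩)
  · -- both outside K, both G-adjacent to x: simpliciality gives G.Adj u v
    have : G.Adj u v := hx (Set.mem_insert_of_mem _ huadj) (Set.mem_insert_of_mem _ hvadj) huv
    exact Or.inr (Or.inl ⟨huK, hvK, this⟩)
  · exact Or.inr (Or.inr (Or.inr ⟨hvK, huK, hmixed v hvK hvsub u (Or.inr huadj)⟩))
  · exact Or.inr (Or.inr (Or.inl ⟨huK, hxK, husub⟩))
  · exact Or.inr (Or.inr (Or.inl ⟨huK, hvK, hmixed u huK husub v (Or.inr hvadj)⟩))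
  · -- both in K: show N(u) ∪ N(v) ≠ univ
    refine Or.inl ⟨huK, hvK, fun huniv => ?_⟩
    have hx' : x ∈ G.neighborSet u ∪ G.neighborSet v := huniv ▸ Set.mem_univ x
    rcases hx' with hxu | hxv
    · apply husub
      intro w hw
      by_cases hwu : w = u
      · exact Set.mem_insert_iff.mpr (Or.inl hwu)
      · have : G.Adj w u := hx hw (Set.mem_insert_of_mem _ hxu.symm) hwu
        exact Set.mem_insert_of_mem _ this.symm
    · apply hvsub
      intro w hw
      by_cases hwv' : w = v
      · exact Set.mem_insert_iff.mpr (Or.inl hwv')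
      · have : G.Adj w v := hx hw (Set.mem_insert_of_mem _ hxv.symm) hwv'
        exact Set.mem_insert_of_mem _ this.symm

end CAG
end
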